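/- Let X : ℝⁿ → ℝⁿ be a locally Lipschitz vector field and g : ℝⁿ → ℝ a continuously differentiable function such that 0 is a regular value of g (i.e., for every x with g(x) = 0, the gradient ∇g(x) ≠ 0). Suppose that for every x with g(x) = 0 one has ⟨∇g(x), X(x)⟩ ≥ 0. Then the set C = {x ∈ ℝⁿ : g(x) ≥ 0} is forward invariant: for every T ∈ (0, ∞] and every curve x : [0, T) → ℝⁿ that is differentiable with x'(t) = X(x(t)) for all t ∈ [0, T) and satisfies g(x(0)) ≥ 0, one has g(x(t)) ≥ 0 for all t ∈ [0, T). -/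

import Mathlib

open scoped RealInnerProductSpace ENNReal
open Metric Set Filter Topology

section NagumoAux

variable {n : ℕ}

lemma hasDerivAt_line (g : EuclideanSpace ℝ (Fin n) → ℝ) (hg : ContDiff ℝ 1 g)
    (z u : EuclideanSpace ℝ (Fin n)) (s : ℝ) :
    HasDerivAt (fun s : ℝ => g (z + s • u)) ⟪gradient g (z + s • u), u⟫ s := by
  have hd : DifferentiableAt ℝ g (z + s • u) := (hg.differentiable one_ne_zero) _
  have hF : HasFDerivAt g
      (InnerProductSpace.toDual ℝ _ (gradient g (z + s • u))) (z + s • u) :=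
    hd.hasGradientAt.hasFDerivAt
  have hline : HasDerivAt (fun s : ℝ => z + s • u) u s := by
    simpa using ((hasDerivAt_id s).smul_const u).const_add z
  have := hF.comp_hasDerivAt s hline
  rw [InnerProductSpace.toDual_apply_apply] at this
  exact this

lemma continuous_gradient (g : EuclideanSpace ℝ (Fin n) → ℝ) (hg : ContDiff ℝ 1 g) :
    Continuous (gradient g) :=
  (InnerProductSpace.toDual ℝ (EuclideanSpace ℝ (Fin n))).symm.continuous.comp
    (hg.continuous_fderiv one_ne_zero)

lemma local_dist_bound (g : EuclideanSpace ℝ (Fin n) → ℝ) (hg : ContDiff ℝ 1 g)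
    (p : EuclideanSpace ℝ (Fin n)) (hgp : g p = 0) (hp : gradient g p ≠ 0) :
    ∃ c > (0:ℝ), ∃ ρ > (0:ℝ), ∀ z, dist z p ≤ ρ →
      infDist z {y | 0 ≤ g y} ≤ c * max 0 (-(g z)) := by
  set a : ℝ := ‖gradient g p‖ with ha_def
  have ha : 0 < a := norm_pos_iff.2 hp
  set u : EuclideanSpace ℝ (Fin n) := a⁻¹ • gradient g p with hu_def
  have hu_norm : ‖u‖ = 1 := by
    rw [hu_def, norm_smul, Real.norm_eq_abs, abs_inv, abs_of_pos ha]
    field_simp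
    exact ha_def.symm
  -- gradient close on a ball
  have hgc := continuous_gradient g hg
  obtain ⟨δ, hδ, hδprop⟩ := Metric.continuousAt_iff.1 hgc.continuousAt (a/2) (by linarith)
  set ρ₀ : ℝ := δ/2 with hρ₀_def
  have hρ₀ : 0 < ρ₀ := by positivity
  have hgrad_close : ∀ y : EuclideanSpace ℝ (Fin n), dist y p ≤ ρ₀ →
      a/2 ≤ ⟪gradient g y, u⟫ := by
    intro y hy
    have h1 : ‖gradient g y - gradient g p‖ < a/2 := by
      have := hδprop (show dist y p < δ by simp only [hρ₀_def] at hy; linarith)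
      rwa [dist_eq_norm] at this
    have h2 : ⟪gradient g p, u⟫ = a := by
      rw [hu_def, real_inner_smul_right, real_inner_self_eq_norm_sq, ← ha_def]
      field_simp
    have h3 : |⟪gradient g y - gradient g p, u⟫| ≤ ‖gradient g y - gradient g p‖ := by
      calc |⟪gradient g y - gradient g p, u⟫|
          ≤ ‖gradient g y - gradient g p‖ * ‖u‖ := abs_real_inner_le_norm _ _
        _ = ‖gradient g y - gradient g p‖ := by rw [hu_norm, mul_one]
    rw [inner_sub_left, h2] at h3
    have h5 := abs_le.1 h3
    linarith [h5.1, h5.2]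
  -- g small on a smaller ball
  have hgcont : ContinuousAt g p := hg.continuous.continuousAt
  obtain ⟨ρ₁, hρ₁, hρ₁prop⟩ := Metric.continuousAt_iff.1 hgcont (a * ρ₀ / 4) (by positivity)
  set ρ : ℝ := min (ρ₁/2) (ρ₀/2) with hρ_def
  have hρ : 0 < ρ := by
    apply lt_min <;> positivity
  refine ⟨2/a, by positivity, ρ, hρ, ?_⟩
  intro z hz
  rcases le_or_gt 0 (g z) with hgz | hgz
  · have : infDist z {y | 0 ≤ g y} = 0 := infDist_zero_of_mem hgz
    rw [this]
    positivity
  · -- g z < 0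
    have hgz_small : -g z ≤ a * ρ₀ / 4 := by
      have : |g z - g p| < a * ρ₀ / 4 := by
        apply hρ₁prop
        calc dist z p ≤ ρ := hz
          _ ≤ ρ₁/2 := min_le_left _ _
          _ < ρ₁ := by linarith
      rw [hgp, sub_zero] at this
      have := abs_lt.1 this
      linarith
    set s : ℝ := 2/a * (-g z) with hs_def
    have hs_pos : 0 < s := by
      apply mul_pos (by positivity); linarith
    have hs_le : s ≤ ρ₀/2 := by
      rw [hs_def]
      calc 2/a * (-g z) ≤ 2/a * (a * ρ₀ / 4) := by
            apply mul_le_mul_of_nonneg_left hgz_small (by positivity)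
        _ = ρ₀/2 := by field_simp; ring
    -- points on the segment stay in the ball of radius ρ₀
    have hseg : ∀ σ ∈ Icc (0:ℝ) s, dist (z + σ • u) p ≤ ρ₀ := by
      intro σ hσ
      calc dist (z + σ • u) p ≤ dist (z + σ • u) z + dist z p := dist_triangle _ _ _
        _ = ‖σ • u‖ + dist z p := by rw [dist_eq_norm]; simp
        _ ≤ σ + ρ := by
            rw [norm_smul, hu_norm, mul_one, Real.norm_eq_abs, abs_of_nonneg hσ.1]
            exact add_le_add_right hz _
        _ ≤ ρ₀/2 + ρ₀/2 := add_le_add (le_trans hσ.2 hs_le) (le_trans (min_le_right _ _) (by linarith))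
        _ = ρ₀ := by ring
    -- mean value estimate
    set ψ : ℝ → ℝ := fun σ => g (z + σ • u) with hψ_def
    have hψderiv : ∀ σ : ℝ, HasDerivAt ψ ⟪gradient g (z + σ • u), u⟫ σ :=
      fun σ => hasDerivAt_line g hg z u σ
    have hmvt : a/2 * (s - 0) ≤ ψ s - ψ 0 := by
      apply Convex.mul_sub_le_image_sub_of_le_deriv (convex_Icc 0 s)
      · exact (hg.continuous.comp
          (continuous_const.add (continuous_id.smul continuous_const))).continuousOn
      · exact fun σ _ => ((hψderiv σ).differentiableAt).differentiableWithinAt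
      · intro σ hσ
        rw [(hψderiv σ).deriv]
        exact hgrad_close _ (hseg σ (interior_subset hσ))
      · exact ⟨le_rfl, hs_pos.le⟩
      · exact ⟨hs_pos.le, le_rfl⟩
      · exact hs_pos.le
    have hψ0 : ψ 0 = g z := by simp [hψ_def]
    have hψs : 0 ≤ ψ s := by
      have : a/2 * s = -g z := by rw [hs_def]; field_simp
      rw [sub_zero, this, hψ0] at hmvt
      linarith
    have hmem : z + s • u ∈ {y : EuclideanSpace ℝ (Fin n) | 0 ≤ g y} := hψs
    calc infDist z {y | 0 ≤ g y} ≤ dist z (z + s • u) := infDist_le_dist_of_mem hmem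
      _ = s := by
          rw [dist_eq_norm]
          simp [norm_smul, hu_norm, abs_of_nonneg hs_pos.le]
      _ = 2/a * max 0 (-(g z)) := by
          rw [hs_def, max_eq_right (by linarith : (0:ℝ) ≤ -g z)]

lemma exists_nearest (g : EuclideanSpace ℝ (Fin n) → ℝ) (hgc : Continuous g)
    (hne : {y : EuclideanSpace ℝ (Fin n) | 0 ≤ g y}.Nonempty)
    (z : EuclideanSpace ℝ (Fin n)) (hz : g z ≤ 0) :
    ∃ p, g p = 0 ∧ dist z p = infDist z {y | 0 ≤ g y} := by
  set C := {y : EuclideanSpace ℝ (Fin n) | 0 ≤ g y} with hC_def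
  have hC : IsClosed C := isClosed_le continuous_const hgc
  rcases eq_or_lt_of_le hz with hz0 | hz0
  · refine ⟨z, hz0, ?_⟩
    have hzmem : z ∈ C := by simp [hC_def]; exact le_of_eq hz0.symm
    rw [dist_self, infDist_zero_of_mem hzmem]
  · have hzC : z ∉ C := by simp [hC_def]; linarith
    obtain ⟨p, hpC, hpd⟩ := hC.exists_infDist_eq_dist hne z
    refine ⟨p, ?_, hpd.symm⟩
    by_contra hgp
    have hgp_pos : 0 < g p := lt_of_le_of_ne hpC (Ne.symm hgp)
    have hzp : z ≠ p := by
      intro h; rw [h] at hz0; linarith [hgp_pos]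
    have hd_pos : 0 < dist z p := dist_pos.2 hzp
    -- a ball around p is inside C
    have hopen : IsOpen {y : EuclideanSpace ℝ (Fin n) | 0 < g y} :=
      isOpen_lt continuous_const hgc
    obtain ⟨δ, hδ, hball⟩ := Metric.isOpen_iff.1 hopen p hgp_pos
    set m : ℝ := min (1/2) (δ / (2 * dist z p)) with hm_def
    have hm_pos : 0 < m := lt_min (by norm_num) (by positivity)
    have hm_lt1 : m < 1 := lt_of_le_of_lt (min_le_left _ _) (by norm_num)
    set q : EuclideanSpace ℝ (Fin n) := p + m • (z - p) with hq_def
    have hqp : dist q p = m * dist z p := by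
      rw [hq_def, dist_eq_norm, add_sub_cancel_left, norm_smul, Real.norm_eq_abs,
        abs_of_pos hm_pos, dist_eq_norm]
    have hqC : q ∈ C := by
      have hqb : q ∈ ball p δ := by
        rw [Metric.mem_ball, hqp]
        calc m * dist z p ≤ δ / (2 * dist z p) * dist z p :=
            mul_le_mul_of_nonneg_right (min_le_right _ _) dist_nonneg
          _ = δ / 2 := by field_simp
          _ < δ := by linarith
      have h5 : 0 < g q := hball hqb
      show (0:ℝ) ≤ g q
      exact h5.le
    have hzq : dist z q = (1 - m) * dist z p := by
      have : z - q = (1 - m) • (z - p) := by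
        rw [hq_def]; rw [sub_smul, one_smul]; abel
      rw [dist_eq_norm, this, norm_smul, Real.norm_eq_abs, abs_of_pos (by linarith),
        dist_eq_norm]
    have : infDist z C ≤ dist z q := infDist_le_dist_of_mem hqC
    rw [hzq, hpd] at this
    nlinarith [hd_pos]

lemma tangency (g : EuclideanSpace ℝ (Fin n) → ℝ) (hg : ContDiff ℝ 1 g)
    (p v : EuclideanSpace ℝ (Fin n)) (hgp : g p = 0)
    (hp : gradient g p ≠ 0) (hv : 0 ≤ ⟪gradient g p, v⟫) {ε : ℝ} (hε : 0 < ε) :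
    ∀ᶠ h in 𝓝[>] (0:ℝ), infDist (p + h • v) {y | 0 ≤ g y} ≤ ε * h := by
  obtain ⟨c, hc, ρ, hρ, hbound⟩ := local_dist_bound g hg p hgp hp
  set ε' : ℝ := ε / c with hε'_def
  have hε' : 0 < ε' := by positivity
  -- derivative at 0 of h ↦ g (p + h • v)
  have hD : HasDerivAt (fun h : ℝ => g (p + h • v)) ⟪gradient g p, v⟫ 0 := by
    have := hasDerivAt_line g hg p v 0
    simpa using this
  have hslope := hasDerivAt_iff_tendsto_slope.1 hD
  have hslope' : Tendsto (slope (fun h : ℝ => g (p + h • v)) 0) (𝓝[>] (0:ℝ))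
      (𝓝 ⟪gradient g p, v⟫) :=
    hslope.mono_left (nhdsWithin_mono _ (fun h hh => ne_of_gt hh))
  have hev1 : ∀ᶠ h in 𝓝[>] (0:ℝ),
      ⟪gradient g p, v⟫ - ε' < slope (fun h : ℝ => g (p + h • v)) 0 h :=
    hslope'.eventually (eventually_gt_nhds (by linarith))
  have hev2 : ∀ᶠ h in 𝓝[>] (0:ℝ), dist (p + h • v) p ≤ ρ := by
    have htd : Tendsto (fun h : ℝ => p + h • v) (𝓝 (0:ℝ)) (𝓝 p) := by
      have : Continuous (fun h : ℝ => p + h • v) :=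
        continuous_const.add (continuous_id.smul continuous_const)
      simpa using this.tendsto 0
    have := htd.eventually (Metric.closedBall_mem_nhds p hρ)
    exact (this.mono (fun h hh => hh)).filter_mono nhdsWithin_le_nhds
  have hev3 : ∀ᶠ h in 𝓝[>] (0:ℝ), h ∈ Ioi (0:ℝ) := eventually_mem_nhdsWithin
  filter_upwards [hev1, hev2, hev3] with h h1 h2 h3
  have hh : (0:ℝ) < h := h3
  -- from slope bound: g (p + h•v) ≥ h * (⟪∇g p, v⟫ - ε') ≥ -h * ε'
  have hs : slope (fun h : ℝ => g (p + h • v)) 0 h = g (p + h • v) / h := by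
    rw [slope_def_field]; simp [hgp]
  rw [hs] at h1
  have hglb : -(g (p + h • v)) ≤ h * ε' := by
    have : (⟪gradient g p, v⟫ - ε') * h < g (p + h • v) := by
      rw [← lt_div_iff₀ hh]; exact h1
    nlinarith
  have hmax : max 0 (-(g (p + h • v))) ≤ h * ε' := by
    apply max_le (by positivity) hglb
  calc infDist (p + h • v) {y | 0 ≤ g y} ≤ c * max 0 (-(g (p + h • v))) := hbound _ h2
    _ ≤ c * (h * ε') := mul_le_mul_of_nonneg_left hmax hc.le
    _ = ε * h := by rw [hε'_def]; field_simp

lemma gronwall_step (X : EuclideanSpace ℝ (Fin n) → EuclideanSpace ℝ (Fin n))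
    (g : EuclideanSpace ℝ (Fin n) → ℝ) (hX : LocallyLipschitz X) (hg : ContDiff ℝ 1 g)
    (hreg : ∀ x, g x = 0 → gradient g x ≠ 0)
    (hbar : ∀ x, g x = 0 → 0 ≤ ⟪gradient g x, X x⟫)
    (x : ℝ → EuclideanSpace ℝ (Fin n)) (τ t₀ : ℝ) (hτ : τ ≤ t₀)
    (hx : ∀ s ∈ Icc τ t₀, HasDerivAt x (X (x s)) s)
    (hne : {y : EuclideanSpace ℝ (Fin n) | 0 ≤ g y}.Nonempty)
    (hb : 0 ≤ g (x τ)) :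
    ∃ η > (0:ℝ), ∀ s ∈ Icc τ (min t₀ (τ + η)), 0 ≤ g (x s) := by
  set C := {y : EuclideanSpace ℝ (Fin n) | 0 ≤ g y} with hC_def
  have hC : IsClosed C := isClosed_le continuous_const hg.continuous
  -- Lipschitz data near x τ
  obtain ⟨K, tnb, htnb, hK⟩ := hX (x τ)
  obtain ⟨r', hr', hball⟩ := Metric.mem_nhds_iff.1 htnb
  set r : ℝ := r' / 2 with hr_def
  have hr : 0 < r := by positivity
  have hcb : closedBall (x τ) r ⊆ tnb := by
    refine subset_trans ?_ hball
    intro y hy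
    rw [Metric.mem_closedBall] at hy
    rw [Metric.mem_ball]
    calc dist y (x τ) ≤ r := hy
      _ < r' := by rw [hr_def]; linarith
  -- continuity of x at τ
  have hxτcont : ContinuousAt x τ := (hx τ ⟨le_rfl, hτ⟩).continuousAt
  obtain ⟨η₁, hη₁, hη₁prop⟩ := Metric.continuousAt_iff.1 hxτcont (r/4) (by positivity)
  set η : ℝ := η₁ / 2 with hη_def
  have hη : 0 < η := by positivity
  refine ⟨η, hη, ?_⟩
  set b' : ℝ := min t₀ (τ + η) with hb'_def
  have hτb' : τ ≤ b' := le_min hτ (by linarith)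
  have hb't₀ : b' ≤ t₀ := min_le_left _ _
  have hsub : Icc τ b' ⊆ Icc τ t₀ := Icc_subset_Icc le_rfl hb't₀
  have hclose : ∀ s ∈ Icc τ b', dist (x s) (x τ) < r/4 := by
    intro s hs
    apply hη₁prop
    rw [Real.dist_eq, abs_of_nonneg (by linarith [hs.1])]
    have : s ≤ τ + η := le_trans hs.2 (min_le_right _ _)
    linarith
  set φ : ℝ → ℝ := fun s => infDist (x s) C with hφ_def
  have hxτC : x τ ∈ C := hb
  have hφτ : φ τ = 0 := infDist_zero_of_mem hxτC
  have hφcont : ContinuousOn φ (Icc τ b') := by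
    intro s hs
    exact ((continuous_infDist_pt C).continuousAt.comp
      (hx s (hsub hs)).continuousAt).continuousWithinAt
  -- the liminf slope estimate
  have key : ∀ s ∈ Ico τ b', ∀ rr : ℝ, (K : ℝ) * φ s < rr →
      ∃ᶠ z in 𝓝[>] s, (z - s)⁻¹ * (φ z - φ s) < rr := by
    intro s hs rr hrr
    have hsmem : s ∈ Icc τ b' := ⟨hs.1, hs.2.le⟩
    have hxs := hx s (hsub hsmem)
    have hφs_nonneg : 0 ≤ φ s := infDist_nonneg
    apply Filter.Eventually.frequently
    rcases lt_or_ge 0 (g (x s)) with hgxs | hgxs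
    · -- interior case: φ ≡ 0 near s
      have hφs : φ s = 0 := infDist_zero_of_mem hgxs.le
      have hrr0 : 0 < rr := by rw [hφs, mul_zero] at hrr; exact hrr
      have hcont : ContinuousAt (fun z => g (x z)) s :=
        hg.continuous.continuousAt.comp hxs.continuousAt
      have hev : ∀ᶠ z in 𝓝 s, 0 < g (x z) := hcont.eventually (eventually_gt_nhds hgxs)
      filter_upwards [hev.filter_mono nhdsWithin_le_nhds] with z hz
      have : φ z = 0 := infDist_zero_of_mem hz.le
      rw [this, hφs]
      simpa using hrr0
    · -- boundary / outside case
      obtain ⟨p, hgp, hdp⟩ := exists_nearest g hg.continuous hne (x s) hgxs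
      have hdpφ : dist (x s) p = φ s := hdp
      have hφs_le : φ s ≤ dist (x s) (x τ) := infDist_le_dist_of_mem hxτC
      have hxs_ball : x s ∈ closedBall (x τ) r := by
        rw [Metric.mem_closedBall]
        linarith [hclose s hsmem]
      have hp_ball : p ∈ closedBall (x τ) r := by
        rw [Metric.mem_closedBall]
        calc dist p (x τ) ≤ dist p (x s) + dist (x s) (x τ) := dist_triangle _ _ _
          _ = φ s + dist (x s) (x τ) := by rw [dist_comm p (x s), hdpφ]
          _ ≤ r/4 + r/4 := by
              have h6 := hclose s hsmem
              exact add_le_add (le_trans hφs_le h6.le) h6.le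
          _ ≤ r := by linarith
      have hLip : dist (X (x s)) (X p) ≤ (K : ℝ) * φ s := by
        calc dist (X (x s)) (X p) ≤ (K : ℝ) * dist (x s) p :=
              hK.dist_le_mul _ (hcb hxs_ball) _ (hcb hp_ball)
          _ = (K : ℝ) * φ s := by rw [hdpφ]
      set gap := (rr - (K : ℝ) * φ s) / 3 with hgap_def
      have hgap : 0 < gap := by rw [hgap_def]; linarith
      -- (1) from the ODE
      have h1 : ∀ᶠ z in 𝓝 s, ‖x z - x s - (z - s) • X (x s)‖ ≤ gap * ‖z - s‖ :=
        (hasDerivAt_iff_isLittleO.1 hxs).def hgap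
      -- (2) tangency at p
      have h2 : ∀ᶠ h in 𝓝[>] (0:ℝ), infDist (p + h • X p) C ≤ gap * h :=
        tangency g hg p (X p) hgp (hreg p hgp) (hbar p hgp) hgap
      have hmap : Tendsto (fun z : ℝ => z - s) (𝓝[>] s) (𝓝[>] (0:ℝ)) := by
        apply tendsto_nhdsWithin_of_tendsto_nhds_of_eventually_within
        · have : Tendsto (fun z : ℝ => z - s) (𝓝 s) (𝓝 (s - s)) :=
            (continuous_id.sub continuous_const).tendsto s
          rw [sub_self] at this
          exact this.mono_left nhdsWithin_le_nhds
        · filter_upwards [eventually_mem_nhdsWithin] with z hz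
          exact sub_pos.2 (mem_Ioi.1 hz)
      have h2' : ∀ᶠ z in 𝓝[>] s, infDist (p + (z - s) • X p) C ≤ gap * (z - s) :=
        hmap.eventually h2
      filter_upwards [h1.filter_mono nhdsWithin_le_nhds, h2', eventually_mem_nhdsWithin]
        with z h1z h2z hzs
      have hzspos : 0 < z - s := sub_pos.2 hzs
      have hnorm : ‖z - s‖ = z - s := by rw [Real.norm_eq_abs, abs_of_pos hzspos]
      rw [hnorm] at h1z
      have hdist : dist (x z) (p + (z - s) • X p) ≤
          gap * (z - s) + φ s + (z - s) * ((K : ℝ) * φ s) := by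
        have heq : x z - (p + (z - s) • X p) =
            (x z - x s - (z - s) • X (x s)) + (x s - p) + (z - s) • (X (x s) - X p) := by
          rw [smul_sub]; abel
        rw [dist_eq_norm, heq]
        calc ‖(x z - x s - (z - s) • X (x s)) + (x s - p) + (z - s) • (X (x s) - X p)‖
            ≤ ‖(x z - x s - (z - s) • X (x s)) + (x s - p)‖ + ‖(z - s) • (X (x s) - X p)‖ :=
              norm_add_le _ _
          _ ≤ ‖x z - x s - (z - s) • X (x s)‖ + ‖x s - p‖ + ‖(z - s) • (X (x s) - X p)‖ := by
              gcongr; exact norm_add_le _ _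
          _ ≤ gap * (z - s) + φ s + (z - s) * ((K : ℝ) * φ s) := by
              gcongr
              · rw [← dist_eq_norm]; exact le_of_eq hdpφ
              · rw [norm_smul, Real.norm_eq_abs, abs_of_pos hzspos]
                gcongr
                rw [← dist_eq_norm]
                exact hLip
      have hφz : φ z ≤ φ s + (z - s) * ((K : ℝ) * φ s + 2 * gap) := by
        calc φ z ≤ infDist (p + (z - s) • X p) C + dist (x z) (p + (z - s) • X p) :=
              infDist_le_infDist_add_dist
          _ ≤ gap * (z - s) + (gap * (z - s) + φ s + (z - s) * ((K : ℝ) * φ s)) :=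
              add_le_add h2z hdist
          _ = φ s + (z - s) * ((K : ℝ) * φ s + 2 * gap) := by ring
      have : (z - s)⁻¹ * (φ z - φ s) ≤ (K : ℝ) * φ s + 2 * gap := by
        rw [inv_mul_le_iff₀ hzspos]
        linarith [hφz]
      have hlt : (K : ℝ) * φ s + 2 * gap < rr := by rw [hgap_def]; linarith
      linarith
  -- apply Grönwall
  have hgron := le_gronwallBound_of_liminf_deriv_right_le (f := φ)
    (f' := fun s => (K : ℝ) * φ s) (δ := 0) (K := (K : ℝ)) (ε := 0)
    hφcont key (le_of_eq hφτ) (fun s _ => by simp)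
  intro s hs
  have hφs := hgron s hs
  rw [gronwallBound_ε0_δ0] at hφs
  have hφ0 : φ s = 0 := le_antisymm hφs infDist_nonneg
  have : x s ∈ C := (hC.mem_iff_infDist_zero hne).2 hφ0
  exact this

end NagumoAux

/-- Euclidean Nagumo-type forward invariance (condition (i) of the paper's Theorem 1):
if `0` is a regular value of `g` and `⟨∇g(x), X(x)⟩ ≥ 0` whenever `g(x) = 0`, then the
zero-superlevel set `{x | g x ≥ 0}` is forward invariant for the locally Lipschitz
vector field `X`. -/
theorem stmt_0 (n : ℕ)
    (X : EuclideanSpace ℝ (Fin n) → EuclideanSpace ℝ (Fin n))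
    (g : EuclideanSpace ℝ (Fin n) → ℝ)
    (hX : LocallyLipschitz X)
    (hg : ContDiff ℝ 1 g)
    (hreg : ∀ x, g x = 0 → gradient g x ≠ 0)
    (hbar : ∀ x, g x = 0 → 0 ≤ ⟪gradient g x, X x⟫)
    (T : ℝ≥0∞) (hT : 0 < T)
    (x : ℝ → EuclideanSpace ℝ (Fin n))
    (hx : ∀ t : ℝ, 0 ≤ t → ENNReal.ofReal t < T → HasDerivAt x (X (x t)) t)
    (hx0 : 0 ≤ g (x 0)) :
    ∀ t : ℝ, 0 ≤ t → ENNReal.ofReal t < T → 0 ≤ g (x t) := by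
  intro t₀ ht₀ ht₀T
  have hne : {y : EuclideanSpace ℝ (Fin n) | 0 ≤ g y}.Nonempty := ⟨x 0, hx0⟩
  have hx' : ∀ s ∈ Set.Icc (0:ℝ) t₀, HasDerivAt x (X (x s)) s := by
    intro s hs
    exact hx s hs.1 (lt_of_le_of_lt (ENNReal.ofReal_le_ofReal hs.2) ht₀T)
  set A : Set ℝ := {τ | τ ∈ Set.Icc 0 t₀ ∧ ∀ s ∈ Set.Icc 0 τ, 0 ≤ g (x s)} with hA_def
  have h0A : (0:ℝ) ∈ A := by
    refine ⟨⟨le_rfl, ht₀⟩, fun s hs => ?_⟩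
    have : s = 0 := le_antisymm hs.2 hs.1
    rwa [this]
  have hbdd : BddAbove A := ⟨t₀, fun y hy => hy.1.2⟩
  set τ : ℝ := sSup A with hτ_def
  have hτ0 : 0 ≤ τ := le_csSup hbdd h0A
  have hτt₀ : τ ≤ t₀ := csSup_le ⟨0, h0A⟩ (fun y hy => hy.1.2)
  have hlt : ∀ s, 0 ≤ s → s < τ → 0 ≤ g (x s) := by
    intro s hs0 hsτ
    obtain ⟨u, huA, hsu⟩ := exists_lt_of_lt_csSup ⟨0, h0A⟩ hsτ
    exact huA.2 s ⟨hs0, hsu.le⟩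
  have hgτ : 0 ≤ g (x τ) := by
    rcases eq_or_lt_of_le hτ0 with h0τ | h0τ
    · rwa [← h0τ]
    · have hcont : ContinuousAt (fun s => g (x s)) τ :=
        hg.continuous.continuousAt.comp (hx' τ ⟨hτ0, hτt₀⟩).continuousAt
      have htend : Filter.Tendsto (fun s => g (x s)) (nhdsWithin τ (Set.Iio τ))
          (nhds (g (x τ))) := hcont.tendsto.mono_left nhdsWithin_le_nhds
      refine ge_of_tendsto htend ?_
      filter_upwards [Ioo_mem_nhdsLT_of_mem (⟨h0τ, le_rfl⟩ : τ ∈ Set.Ioc 0 τ)] with s hs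
      exact hlt s hs.1.le hs.2
  have hAll : ∀ s ∈ Set.Icc (0:ℝ) τ, 0 ≤ g (x s) := by
    intro s hs
    rcases lt_or_eq_of_le hs.2 with h | h
    · exact hlt s hs.1 h
    · rwa [h]
  -- τ must equal t₀
  have hτeq : τ = t₀ := by
    by_contra hne'
    have hτlt : τ < t₀ := lt_of_le_of_ne hτt₀ hne'
    obtain ⟨η, hη, hstep⟩ := gronwall_step X g hX hg hreg hbar x τ t₀ hτt₀
      (fun s hs => hx' s ⟨le_trans hτ0 hs.1, hs.2⟩) hne hgτ
    set τ' : ℝ := min t₀ (τ + η) with hτ'_def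
    have hττ' : τ < τ' := lt_min hτlt (by linarith)
    have hτ'A : τ' ∈ A := by
      refine ⟨⟨le_trans hτ0 hττ'.le, min_le_left _ _⟩, fun s hs => ?_⟩
      rcases le_or_gt s τ with h | h
      · exact hAll s ⟨hs.1, h⟩
      · exact hstep s ⟨h.le, hs.2⟩
    have : τ' ≤ τ := le_csSup hbdd hτ'A
    linarith
  exact hAll t₀ ⟨ht₀, hτeq ▸ le_rfl⟩
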